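/- Let M be an m×n matrix with rational entries. If w is a weighting for M and v is a coweighting for M, then 1_nᵀ·w = v·1_m = 1_nᵀ·M⁺·1_m, where M⁺ is the Moore–Penrose inverse of M. -/
import Mathlib


open Matrix

/-- `Y` is a Moore–Penrose inverse of `M`. -/
def IsMoorePenrose {m n : Type*} [Fintype m] [Fintype n]
    (M : Matrix m n ℚ) (Y : Matrix n m ℚ) : Prop :=
  M * Y * M = M ∧ Y * M * Y = Y ∧ (Y * M)ᵀ = Y * M ∧ (M * Y)ᵀ = M * Y

/-- If `w` is a weighting for an `m×n` rational matrix `M` and `v` is a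
coweighting for `M`, then `1ₙᵀ·w = v·1ₘ = 1ₙᵀ·M⁺·1ₘ`, where `M⁺` is the Moore–Penrose
inverse of `M`. -/
theorem sum_weighting_eq_sum_coweighting {m n : ℕ} (M : Matrix (Fin m) (Fin n) ℚ)
    (Y : Matrix (Fin n) (Fin m) ℚ) (hY : IsMoorePenrose M Y)
    (w : Fin n → ℚ) (hw : M *ᵥ w = 1) (v : Fin m → ℚ) (hv : v ᵥ* M = 1) :
    (1 : Fin n → ℚ) ⬝ᵥ w = v ⬝ᵥ (1 : Fin m → ℚ) ∧
      (1 : Fin n → ℚ) ⬝ᵥ w = (1 : Fin n → ℚ) ⬝ᵥ (Y *ᵥ (1 : Fin m → ℚ)) := by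
  obtain ⟨h1, -, -, -⟩ := hY
  have e1 : (1 : Fin n → ℚ) ⬝ᵥ w = v ⬝ᵥ (1 : Fin m → ℚ) := by
    rw [← hv, ← hw, dotProduct_mulVec]
  refine ⟨e1, ?_⟩
  rw [e1]
  conv_lhs => rw [← hw]
  conv_rhs => rw [← hv, ← hw, dotProduct_mulVec, vecMul_vecMul,
    dotProduct_mulVec, vecMul_vecMul, h1, ← dotProduct_mulVec]
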